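/- (Theorem 4.1, robustness certificate.) Let x ∈ ℝ^d be a point at which the ELLIPS score has a unique maximizing class i_*, with margin m(x) > 0, and suppose c_M(x) > 0, where c_M(x) = max_{i≠i_*} ‖Σ_{i_*}⁻¹(x−μ_{i_*}) − Σ_i⁻¹(x−μ_i)‖₂, and let λ_min = min_{i≠i_*} λ_min(Σ_i⁻¹ − Σ_{i_*}⁻¹). Then for every x' ∈ ℝ^d with ‖x'−x‖₂ ≤ m(x) / ( √(c_M(x)² + (−λ_min)_+ · m(x)) + c_M(x) ), one has score(x', i_*) ≥ score(x', i) for every i ≠ i_*; in particular the ELLIPS classification of x' agrees with that of x. Here (t)_+ = max(t,0). -/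

import Mathlib

open Matrix Real

/-- The Euclidean (ℓ₂) norm of a vector in `Fin d → ℝ`. -/
noncomputable def l2norm {d : ℕ} (v : Fin d → ℝ) : ℝ :=
  Real.sqrt (v ⬝ᵥ v)

/-- The smallest eigenvalue of a symmetric matrix, given by the Rayleigh quotient
characterization: the infimum of `vᵀ M v` over unit vectors `v`. -/
noncomputable def minEig {d : ℕ} (M : Matrix (Fin d) (Fin d) ℝ) : ℝ :=
  ⨅ v : {v : Fin d → ℝ // v ⬝ᵥ v = 1}, (v : Fin d → ℝ) ⬝ᵥ (M *ᵥ (v : Fin d → ℝ))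

/-- The ELLIPS score of class `i` at point `x`:
`score(x, i) = −(x−μᵢ)ᵀΣᵢ⁻¹(x−μᵢ) − log det Σᵢ + 2 log πᵢ`. -/
noncomputable def score {d K : ℕ} (μ : Fin K → Fin d → ℝ)
    (S : Fin K → Matrix (Fin d) (Fin d) ℝ) (pri : Fin K → ℝ)
    (x : Fin d → ℝ) (i : Fin K) : ℝ :=
  -((x - μ i) ⬝ᵥ ((S i)⁻¹ *ᵥ (x - μ i))) - Real.log (S i).det + 2 * Real.log (pri i)

lemma dotProduct_self_nonneg' {d : ℕ} (v : Fin d → ℝ) : 0 ≤ v ⬝ᵥ v :=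
  Finset.sum_nonneg fun i _ => mul_self_nonneg (v i)

lemma l2norm_nonneg' {d : ℕ} (v : Fin d → ℝ) : 0 ≤ l2norm v := Real.sqrt_nonneg _

lemma l2norm_sq {d : ℕ} (v : Fin d → ℝ) : l2norm v ^ 2 = v ⬝ᵥ v :=
  Real.sq_sqrt (dotProduct_self_nonneg' v)

/-- Cauchy–Schwarz for dot products. -/
lemma dot_le_l2 {d : ℕ} (v w : Fin d → ℝ) : v ⬝ᵥ w ≤ l2norm v * l2norm w := by
  have h := Finset.sum_mul_sq_le_sq_mul_sq Finset.univ v w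
  have h1 : v ⬝ᵥ w ≤ Real.sqrt ((v ⬝ᵥ w) ^ 2) := by
    rw [Real.sqrt_sq_eq_abs]; exact le_abs_self _
  calc v ⬝ᵥ w ≤ Real.sqrt ((v ⬝ᵥ w) ^ 2) := h1
    _ ≤ Real.sqrt ((v ⬝ᵥ v) * (w ⬝ᵥ w)) := by
        apply Real.sqrt_le_sqrt
        simpa [dotProduct, pow_two] using h
    _ = l2norm v * l2norm w := Real.sqrt_mul (dotProduct_self_nonneg' v) _

/-- Rayleigh quotient values on the unit sphere are bounded below. -/
lemma rayleigh_bddBelow {d : ℕ} (M : Matrix (Fin d) (Fin d) ℝ) :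
    BddBelow (Set.range fun v : {v : Fin d → ℝ // v ⬝ᵥ v = 1} =>
      (v : Fin d → ℝ) ⬝ᵥ (M *ᵥ (v : Fin d → ℝ))) := by
  refine ⟨-(∑ i, ∑ j, |M i j|), ?_⟩
  rintro _ ⟨⟨v, hv⟩, rfl⟩
  simp only
  have habs : ∀ k, |v k| ≤ 1 := by
    intro k
    have h1 : v k * v k ≤ 1 := by
      rw [← hv]
      exact Finset.single_le_sum (fun i _ => mul_self_nonneg (v i)) (Finset.mem_univ k)
    nlinarith [abs_nonneg (v k), sq_abs (v k)]
  have hb : |v ⬝ᵥ (M *ᵥ v)| ≤ ∑ i, ∑ j, |M i j| := by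
    calc |v ⬝ᵥ (M *ᵥ v)| ≤ ∑ i, |v i * ∑ j, M i j * v j| := by
          simpa [dotProduct, Matrix.mulVec] using
            Finset.abs_sum_le_sum_abs (fun i => v i * ∑ j, M i j * v j) Finset.univ
      _ ≤ ∑ i, ∑ j, |M i j| := by
          refine Finset.sum_le_sum fun i _ => ?_
          rw [abs_mul]
          calc |v i| * |∑ j, M i j * v j| ≤ 1 * ∑ j, |M i j| := by
                refine mul_le_mul (habs i) ?_ (abs_nonneg _) zero_le_one
                calc |∑ j, M i j * v j| ≤ ∑ j, |M i j * v j| :=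
                      Finset.abs_sum_le_sum_abs _ _
                  _ ≤ ∑ j, |M i j| := by
                      refine Finset.sum_le_sum fun j _ => ?_
                      rw [abs_mul]
                      nlinarith [habs j, abs_nonneg (M i j)]
            _ = ∑ j, |M i j| := one_mul _
  linarith [neg_abs_le (v ⬝ᵥ (M *ᵥ v))]

lemma minEig_le_rayleigh {d : ℕ} (M : Matrix (Fin d) (Fin d) ℝ) (δ : Fin d → ℝ) :
    minEig M * (δ ⬝ᵥ δ) ≤ δ ⬝ᵥ (M *ᵥ δ) := by
  by_cases hδ : δ ⬝ᵥ δ = 0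
  · have : δ = 0 := dotProduct_self_eq_zero.mp hδ
    simp [this, hδ]
  · have hpos : 0 < δ ⬝ᵥ δ := lt_of_le_of_ne (dotProduct_self_nonneg' δ) (Ne.symm hδ)
    set n2 := δ ⬝ᵥ δ with hn2
    set c : ℝ := (Real.sqrt n2)⁻¹ with hc
    have hsq : Real.sqrt n2 * Real.sqrt n2 = n2 := Real.mul_self_sqrt hpos.le
    have hcsq : c * c * n2 = 1 := by
      have h2 : c * c = n2⁻¹ := by rw [hc, ← mul_inv, hsq]
      rw [h2, inv_mul_cancel₀ hδ]
    have hunit : (c • δ) ⬝ᵥ (c • δ) = 1 := by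
      rw [smul_dotProduct, dotProduct_smul]
      simpa [mul_assoc] using hcsq
    have hle : minEig M ≤ (c • δ) ⬝ᵥ (M *ᵥ (c • δ)) :=
      ciInf_le (rayleigh_bddBelow M) ⟨c • δ, hunit⟩
    have hval : (c • δ) ⬝ᵥ (M *ᵥ (c • δ)) = c * c * (δ ⬝ᵥ (M *ᵥ δ)) := by
      rw [Matrix.mulVec_smul, smul_dotProduct, dotProduct_smul]
      simp [mul_assoc]
    rw [hval] at hle
    have := mul_le_mul_of_nonneg_right hle hpos.le
    calc minEig M * n2 ≤ c * c * (δ ⬝ᵥ (M *ᵥ δ)) * n2 := this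
      _ = (c * c * n2) * (δ ⬝ᵥ (M *ᵥ δ)) := by ring
      _ = δ ⬝ᵥ (M *ᵥ δ) := by rw [hcsq, one_mul]

lemma expand_quad {d : ℕ} (A : Matrix (Fin d) (Fin d) ℝ) (hA : Aᵀ = A) (δ u : Fin d → ℝ) :
    (δ + u) ⬝ᵥ (A *ᵥ (δ + u)) =
      δ ⬝ᵥ (A *ᵥ δ) + 2 * (δ ⬝ᵥ (A *ᵥ u)) + u ⬝ᵥ (A *ᵥ u) := by
  have hsym : u ⬝ᵥ (A *ᵥ δ) = δ ⬝ᵥ (A *ᵥ u) := by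
    rw [Matrix.dotProduct_mulVec, ← Matrix.mulVec_transpose, hA, dotProduct_comm]
  simp only [Matrix.mulVec_add, dotProduct_add, add_dotProduct, hsym]
  ring

lemma arith_cert (m cM lam r : ℝ) (hm : 0 < m) (hcM : 0 < cM) (hr0 : 0 ≤ r)
    (hr : r ≤ m / (Real.sqrt (cM ^ 2 + max (-lam) 0 * m) + cM)) :
    2 * cM * r + max (-lam) 0 * r ^ 2 ≤ m := by
  set L := max (-lam) 0 with hL
  have hL0 : 0 ≤ L := le_max_right _ _
  set s := Real.sqrt (cM ^ 2 + L * m) with hs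
  have hs0 : 0 ≤ s := Real.sqrt_nonneg _
  have hs2 : s ^ 2 = cM ^ 2 + L * m := Real.sq_sqrt (by positivity)
  have hscM : 0 < s + cM := by positivity
  have hrm : r * (s + cM) ≤ m := (le_div_iff₀ hscM).mp hr
  have hLr : L * r ≤ s - cM := by
    have h1 : L * (r * (s + cM)) ≤ L * m := mul_le_mul_of_nonneg_left hrm hL0
    have h2 : L * m = (s - cM) * (s + cM) := by nlinarith [hs2]
    nlinarith [h1, h2, hscM]
  nlinarith [mul_le_mul_of_nonneg_left hLr hr0, hrm, hr0]

theorem stmt6 {d K : ℕ} (hd : 1 ≤ d) (hK : 2 ≤ K)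
    (μ : Fin K → Fin d → ℝ) (S : Fin K → Matrix (Fin d) (Fin d) ℝ)
    (pri : Fin K → ℝ) (hpri : ∀ i, 0 < pri i) (hS : ∀ i, (S i).PosDef)
    (x : Fin d → ℝ) (istar : Fin K)
    (hmaxUnique : ∀ i, i ≠ istar → score μ S pri x i < score μ S pri x istar)
    (m cM lam : ℝ)
    (hm : m = score μ S pri x istar - ⨆ i : {i : Fin K // i ≠ istar}, score μ S pri x i)
    (hcM : cM = ⨆ i : {i : Fin K // i ≠ istar},
      l2norm ((S istar)⁻¹ *ᵥ (x - μ istar) - (S i)⁻¹ *ᵥ (x - μ i)))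
    (hlam : lam = ⨅ i : {i : Fin K // i ≠ istar}, minEig ((S i)⁻¹ - (S istar)⁻¹))
    (hmpos : 0 < m) (hcMpos : 0 < cM) :
    ∀ x' : Fin d → ℝ,
      l2norm (x' - x) ≤ m / (Real.sqrt (cM ^ 2 + max (-lam) 0 * m) + cM) →
      ∀ i, i ≠ istar → score μ S pri x' i ≤ score μ S pri x' istar := by
  intro x' hx' i hi
  have hAt : ((S istar)⁻¹)ᵀ = (S istar)⁻¹ := by
    have := (hS istar).isHermitian.inv; simpa [Matrix.IsSymm] using this
  have hBt : ((S i)⁻¹)ᵀ = (S i)⁻¹ := by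
    have := (hS i).isHermitian.inv; simpa [Matrix.IsSymm] using this
  -- abbreviations (plain terms)
  have e1 : (x' - μ istar) ⬝ᵥ ((S istar)⁻¹ *ᵥ (x' - μ istar)) =
      (x' - x) ⬝ᵥ ((S istar)⁻¹ *ᵥ (x' - x)) +
        2 * ((x' - x) ⬝ᵥ ((S istar)⁻¹ *ᵥ (x - μ istar))) +
        (x - μ istar) ⬝ᵥ ((S istar)⁻¹ *ᵥ (x - μ istar)) := by
    rw [← sub_add_sub_cancel x' x (μ istar)]
    exact expand_quad _ hAt _ _
  have e2 : (x' - μ i) ⬝ᵥ ((S i)⁻¹ *ᵥ (x' - μ i)) =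
      (x' - x) ⬝ᵥ ((S i)⁻¹ *ᵥ (x' - x)) +
        2 * ((x' - x) ⬝ᵥ ((S i)⁻¹ *ᵥ (x - μ i))) +
        (x - μ i) ⬝ᵥ ((S i)⁻¹ *ᵥ (x - μ i)) := by
    rw [← sub_add_sub_cancel x' x (μ i)]
    exact expand_quad _ hBt _ _
  -- margin bound at x
  have hscore : score μ S pri x i ≤ score μ S pri x istar - m := by
    have hbdd : BddAbove (Set.range fun j : {j : Fin K // j ≠ istar} =>
        score μ S pri x (j : Fin K)) := (Set.finite_range _).bddAbove
    have h := le_ciSup hbdd (⟨i, hi⟩ : {j : Fin K // j ≠ istar})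
    simp only at h
    rw [hm]
    linarith [h]
  -- Cauchy-Schwarz bound
  have hcs : (x' - x) ⬝ᵥ ((S istar)⁻¹ *ᵥ (x - μ istar) - (S i)⁻¹ *ᵥ (x - μ i)) ≤
      l2norm (x' - x) * cM := by
    have h1 := dot_le_l2 (x' - x) ((S istar)⁻¹ *ᵥ (x - μ istar) - (S i)⁻¹ *ᵥ (x - μ i))
    have hbdd : BddAbove (Set.range fun j : {j : Fin K // j ≠ istar} =>
        l2norm ((S istar)⁻¹ *ᵥ (x - μ istar) - (S (j : Fin K))⁻¹ *ᵥ (x - μ (j : Fin K)))) :=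
      (Set.finite_range _).bddAbove
    have h2 := le_ciSup hbdd (⟨i, hi⟩ : {j : Fin K // j ≠ istar})
    simp only at h2
    rw [← hcM] at h2
    calc (x' - x) ⬝ᵥ ((S istar)⁻¹ *ᵥ (x - μ istar) - (S i)⁻¹ *ᵥ (x - μ i)) ≤
        l2norm (x' - x) * l2norm ((S istar)⁻¹ *ᵥ (x - μ istar) - (S i)⁻¹ *ᵥ (x - μ i)) := h1
      _ ≤ l2norm (x' - x) * cM :=
        mul_le_mul_of_nonneg_left h2 (l2norm_nonneg' _)
  -- quadratic term bound
  have hq : lam * ((x' - x) ⬝ᵥ (x' - x)) ≤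
      (x' - x) ⬝ᵥ (((S i)⁻¹ - (S istar)⁻¹) *ᵥ (x' - x)) := by
    have hbdd : BddBelow (Set.range fun j : {j : Fin K // j ≠ istar} =>
        minEig ((S (j : Fin K))⁻¹ - (S istar)⁻¹)) := (Set.finite_range _).bddBelow
    have h1 := ciInf_le hbdd (⟨i, hi⟩ : {j : Fin K // j ≠ istar})
    simp only at h1
    rw [← hlam] at h1
    calc lam * ((x' - x) ⬝ᵥ (x' - x)) ≤
        minEig ((S i)⁻¹ - (S istar)⁻¹) * ((x' - x) ⬝ᵥ (x' - x)) :=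
          mul_le_mul_of_nonneg_right h1 (dotProduct_self_nonneg' _)
      _ ≤ (x' - x) ⬝ᵥ (((S i)⁻¹ - (S istar)⁻¹) *ᵥ (x' - x)) := minEig_le_rayleigh _ _
  -- key algebraic identity
  have key : score μ S pri x' istar - score μ S pri x' i =
      (score μ S pri x istar - score μ S pri x i)
        - 2 * ((x' - x) ⬝ᵥ ((S istar)⁻¹ *ᵥ (x - μ istar) - (S i)⁻¹ *ᵥ (x - μ i)))
        + (x' - x) ⬝ᵥ (((S i)⁻¹ - (S istar)⁻¹) *ᵥ (x' - x)) := by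
    simp only [score]
    rw [e1, e2, Matrix.sub_mulVec, dotProduct_sub, dotProduct_sub]
    ring
  -- arithmetic
  have hr0 : 0 ≤ l2norm (x' - x) := l2norm_nonneg' _
  have harith := arith_cert m cM lam (l2norm (x' - x)) hmpos hcMpos hr0 hx'
  have hd2 : (x' - x) ⬝ᵥ (x' - x) = l2norm (x' - x) ^ 2 := (l2norm_sq _).symm
  have hneg : -(max (-lam) 0) * ((x' - x) ⬝ᵥ (x' - x)) ≤ lam * ((x' - x) ⬝ᵥ (x' - x)) := by
    have h1 : -(max (-lam) 0) ≤ lam := by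
      have := le_max_left (-lam) (0 : ℝ); linarith
    exact mul_le_mul_of_nonneg_right h1 (dotProduct_self_nonneg' _)
  rw [hd2] at hq hneg
  nlinarith [key, hscore, hcs, hq, hneg, harith]
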